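/- For every r > 0, the gamma bridge ζ^r is a Markov process with respect to its natural filtration: for every bounded measurable g : ℝ → ℝ and all 0 ≤ t < u ≤ r, E[g(ζ^r_u) | σ(ζ^r_s, s ≤ t)] = E[g(ζ^r_u) | σ(ζ^r_t)] P-a.s. -/

import Mathlib

open MeasureTheory ProbabilityTheory Real Set Filter

noncomputable section

/-- A standard gamma process on a probability space: starts at `0` a.s., has independent
increments, the increment over `[s, t]` is gamma-distributed with shape `t - s` and rate `1`,
and almost every sample path is right-continuous with left limits. -/
structure IsStdGammaProcess {Ω : Type*} [MeasurableSpace Ω] (P : Measure Ω)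
    (γ : ℝ → Ω → ℝ) : Prop where
  measurable : ∀ t : ℝ, Measurable (γ t)
  zero : ∀ᵐ ω ∂P, γ 0 ω = 0
  indep_incr : ∀ (n : ℕ) (t : Fin (n + 1) → ℝ), Monotone t → (∀ i, 0 ≤ t i) →
    iIndepFun
      (fun i : Fin n => fun ω => γ (t i.succ) ω - γ (t i.castSucc) ω) P
  incr_law : ∀ s t : ℝ, 0 ≤ s → s < t →
    P.map (fun ω => γ t ω - γ s ω) = gammaMeasure (t - s) 1
  cadlag : ∀ᵐ ω ∂P,
    (∀ t : ℝ, 0 ≤ t → ContinuousWithinAt (fun s => γ s ω) (Set.Ici t) t) ∧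
    (∀ t : ℝ, 0 < t → ∃ l : ℝ, Tendsto (fun s => γ s ω) (nhdsWithin t (Set.Iio t)) (nhds l))

namespace GammaBridgeAux

open scoped ENNReal NNReal

lemma gammaMeasure_Iic_zero (a r : ℝ) : gammaMeasure a r (Iic 0) = 0 := by
  rw [gammaMeasure, withDensity_apply _ measurableSet_Iic,
    lintegral_Iic_eq_lintegral_Iio_add_Icc _ le_rfl,
    lintegral_gammaPDF_of_nonpos le_rfl, zero_add, Icc_self,
    setLIntegral_measure_zero _ _ (measure_singleton 0)]

lemma ae_pos_of_map_gamma {Ω : Type*} [MeasurableSpace Ω] {P : Measure Ω} {X : Ω → ℝ}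
    (hX : Measurable X) {a : ℝ} (h : P.map X = gammaMeasure a 1) :
    ∀ᵐ ω ∂P, 0 < X ω := by
  have h0 : P (X ⁻¹' Iic 0) = 0 := by
    rw [← Measure.map_apply hX measurableSet_Iic, h, gammaMeasure_Iic_zero]
  have : ∀ᵐ ω ∂P, ω ∉ X ⁻¹' Iic 0 := measure_eq_zero_iff_ae_notMem.mp h0
  filter_upwards [this] with ω hω
  simpa [not_le] using hω

lemma hasFDerivAt_psi (p : ℝ × ℝ) :
    HasFDerivAt (fun q : ℝ × ℝ => (q.1 * q.2, q.1 * (1 - q.2)))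
      (LinearMap.toContinuousLinearMap (Matrix.toLin (Module.Basis.finTwoProd ℝ) (Module.Basis.finTwoProd ℝ)
        !![p.2, p.1; 1 - p.2, -p.1])) p := by
  have h1 : HasFDerivAt (fun q : ℝ × ℝ => q.1 * q.2)
      (p.1 • ContinuousLinearMap.snd ℝ ℝ ℝ + p.2 • ContinuousLinearMap.fst ℝ ℝ ℝ) p :=
    hasFDerivAt_fst.mul hasFDerivAt_snd
  have h2 : HasFDerivAt (fun q : ℝ × ℝ => q.1 * (1 - q.2))
      (p.1 • -ContinuousLinearMap.snd ℝ ℝ ℝ + (1 - p.2) • ContinuousLinearMap.fst ℝ ℝ ℝ) p :=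
    hasFDerivAt_fst.mul ((hasFDerivAt_snd).const_sub 1)
  have h := h1.prodMk h2
  rw [Matrix.toLin_finTwoProd_toContinuousLinearMap]
  have e1 : (p.2 : ℝ) • ContinuousLinearMap.fst ℝ ℝ ℝ + p.1 • ContinuousLinearMap.snd ℝ ℝ ℝ
      = p.1 • ContinuousLinearMap.snd ℝ ℝ ℝ + p.2 • ContinuousLinearMap.fst ℝ ℝ ℝ :=
    add_comm _ _
  have e2 : (1 - p.2) • ContinuousLinearMap.fst ℝ ℝ ℝ + (-p.1) • ContinuousLinearMap.snd ℝ ℝ ℝ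
      = p.1 • -ContinuousLinearMap.snd ℝ ℝ ℝ + (1 - p.2) • ContinuousLinearMap.fst ℝ ℝ ℝ := by
    rw [add_comm, smul_neg, ← neg_smul]
  rw [e1, e2]
  exact h

lemma det_psi_deriv (p : ℝ × ℝ) :
    (LinearMap.toContinuousLinearMap (Matrix.toLin (Module.Basis.finTwoProd ℝ) (Module.Basis.finTwoProd ℝ)
        !![p.2, p.1; 1 - p.2, -p.1])).det = -p.1 := by
  simp only [ContinuousLinearMap.det, LinearMap.coe_toContinuousLinearMap, LinearMap.det_toLin,
    Matrix.det_fin_two_of]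
  ring


lemma gamma_prod_eq_withDensity {a c : ℝ} (ha : 0 < a) (hc : 0 < c) :
    (gammaMeasure a 1).prod (gammaMeasure c 1)
      = (volume : Measure (ℝ × ℝ)).withDensity
          (fun p => gammaPDF a 1 p.1 * gammaPDF c 1 p.2) := by
  haveI := isProbabilityMeasure_gammaMeasure ha one_pos
  haveI := isProbabilityMeasure_gammaMeasure hc one_pos
  refine Measure.prod_eq fun s t hs ht => ?_
  rw [withDensity_apply _ (hs.prod ht), Measure.volume_eq_prod, ← Measure.prod_restrict,
    lintegral_prod_mul (f := gammaPDF a 1) (g := gammaPDF c 1)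
      ((measurable_gammaPDFReal a 1).ennreal_ofReal.aemeasurable)
      ((measurable_gammaPDFReal c 1).ennreal_ofReal.aemeasurable),
    gammaMeasure, gammaMeasure, withDensity_apply _ hs, withDensity_apply _ ht]

lemma dens_transform {a c : ℝ} (ha : 0 < a) (hc : 0 < c) {q : ℝ × ℝ}
    (hq : q ∈ Ioi (0:ℝ) ×ˢ Ioo (0:ℝ) 1) :
    ENNReal.ofReal q.1 * (gammaPDF a 1 (q.1 * q.2) * gammaPDF c 1 (q.1 * (1 - q.2)))
      = ENNReal.ofReal (q.1 ^ (a + c - 1) * exp (-q.1) / (Gamma a * Gamma c)) *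
        ENNReal.ofReal (q.2 ^ (a - 1) * (1 - q.2) ^ (c - 1)) := by
  obtain ⟨hs, hb, hb1⟩ : 0 < q.1 ∧ 0 < q.2 ∧ q.2 < 1 := ⟨hq.1, hq.2.1, hq.2.2⟩
  have hw : (0:ℝ) < 1 - q.2 := by linarith
  have hGa := Real.Gamma_pos_of_pos ha
  have hGc := Real.Gamma_pos_of_pos hc
  rw [gammaPDF_of_nonneg (by positivity), gammaPDF_of_nonneg (by positivity)]
  rw [← ENNReal.ofReal_mul (by positivity), ← ENNReal.ofReal_mul (by positivity),
    ← ENNReal.ofReal_mul (by positivity)]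
  congr 1
  have h1 : (q.1 * q.2) ^ (a - 1) = q.1 ^ (a - 1) * q.2 ^ (a - 1) :=
    Real.mul_rpow hs.le hb.le
  have h2 : (q.1 * (1 - q.2)) ^ (c - 1) = q.1 ^ (c - 1) * (1 - q.2) ^ (c - 1) :=
    Real.mul_rpow hs.le hw.le
  have h3 : q.1 * (q.1 ^ (a - 1) * q.1 ^ (c - 1)) = q.1 ^ (a + c - 1) := by
    rw [← Real.rpow_add hs]
    nth_rewrite 1 [← Real.rpow_one q.1]
    rw [← Real.rpow_add hs]
    ring_nf
  have h4 : exp (-(1 * (q.1 * q.2))) * exp (-(1 * (q.1 * (1 - q.2)))) = exp (-q.1) := by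
    rw [← Real.exp_add]; congr 1; ring
  rw [one_rpow, one_rpow, h1, h2, ← h3, ← h4]
  field_simp

lemma psi_image :
    (fun q : ℝ × ℝ => (q.1 * q.2, q.1 * (1 - q.2))) '' (Ioi (0:ℝ) ×ˢ Ioo (0:ℝ) 1)
      = Ioi (0:ℝ) ×ˢ Ioi (0:ℝ) := by
  ext ⟨y, z⟩
  simp only [mem_image, mem_prod, mem_Ioi, mem_Ioo, Prod.exists, Prod.mk.injEq]
  constructor
  · rintro ⟨s, b, ⟨hs, hb, hb1⟩, h1, h2⟩
    constructor
    · rw [← h1]; positivity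
    · rw [← h2]; have : (0:ℝ) < 1 - b := by linarith
      positivity
  · rintro ⟨hy, hz⟩
    refine ⟨y + z, y / (y + z), ⟨by positivity, by positivity,
      (div_lt_one (by positivity)).mpr (by linarith)⟩, ?_, ?_⟩
    · field_simp
    · field_simp
      ring

lemma phi_psi {q : ℝ × ℝ} (hq : q ∈ Ioi (0:ℝ) ×ˢ Ioo (0:ℝ) 1) :
    ((fun p : ℝ × ℝ => (p.1 + p.2, p.1 / (p.1 + p.2)))
      ((fun q : ℝ × ℝ => (q.1 * q.2, q.1 * (1 - q.2))) q)) = q := by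
  obtain ⟨hs, hb, hb1⟩ : 0 < q.1 ∧ 0 < q.2 ∧ q.2 < 1 := ⟨hq.1, hq.2.1, hq.2.2⟩
  have h1 : q.1 * q.2 + q.1 * (1 - q.2) = q.1 := by ring
  simp only [h1]
  have : q.1 * q.2 / q.1 = q.2 := by field_simp
  rw [Prod.ext_iff]
  exact ⟨rfl, this⟩

lemma psi_injOn :
    InjOn (fun q : ℝ × ℝ => (q.1 * q.2, q.1 * (1 - q.2))) (Ioi (0:ℝ) ×ˢ Ioo (0:ℝ) 1) := by
  intro p hp p' hp' h
  have := congrArg (fun p : ℝ × ℝ => (p.1 + p.2, p.1 / (p.1 + p.2))) h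
  exact (phi_psi hp).symm.trans (this.trans (phi_psi hp'))

lemma map_phi_apply {a c : ℝ} (ha : 0 < a) (hc : 0 < c) {E : Set (ℝ × ℝ)}
    (hE : MeasurableSet E) :
    ((gammaMeasure a 1).prod (gammaMeasure c 1))
        ((fun p : ℝ × ℝ => (p.1 + p.2, p.1 / (p.1 + p.2))) ⁻¹' E)
      = ∫⁻ q in E ∩ Ioi (0:ℝ) ×ˢ Ioo (0:ℝ) 1,
          ENNReal.ofReal (q.1 ^ (a + c - 1) * exp (-q.1) / (Gamma a * Gamma c)) *
          ENNReal.ofReal (q.2 ^ (a - 1) * (1 - q.2) ^ (c - 1)) := by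
  set Φ : ℝ × ℝ → ℝ × ℝ := fun p => (p.1 + p.2, p.1 / (p.1 + p.2)) with hΦdef
  set Ψ : ℝ × ℝ → ℝ × ℝ := fun q => (q.1 * q.2, q.1 * (1 - q.2)) with hΨdef
  set dens : ℝ × ℝ → ℝ≥0∞ := fun p => gammaPDF a 1 p.1 * gammaPDF c 1 p.2 with hdensdef
  have hΦ : Measurable Φ :=
    (measurable_fst.add measurable_snd).prodMk
      (measurable_fst.div (measurable_fst.add measurable_snd))
  have hdensm : Measurable dens :=
    ((measurable_gammaPDFReal a 1).ennreal_ofReal.comp measurable_fst).mul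
      ((measurable_gammaPDFReal c 1).ennreal_ofReal.comp measurable_snd)
  have hEm : MeasurableSet (Φ ⁻¹' E) := hΦ hE
  have hQ : MeasurableSet (Ioi (0:ℝ) ×ˢ Ioi (0:ℝ)) := measurableSet_Ioi.prod measurableSet_Ioi
  have hQ' : MeasurableSet (Ioi (0:ℝ) ×ˢ Ioo (0:ℝ) 1) := measurableSet_Ioi.prod measurableSet_Ioo
  rw [gamma_prod_eq_withDensity ha hc, withDensity_apply _ hEm]
  -- step 1: restrict to the positive quadrant
  have hnull : (volume : Measure (ℝ × ℝ)) (({0} : Set ℝ) ×ˢ (univ : Set ℝ)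
      ∪ (univ : Set ℝ) ×ˢ ({0} : Set ℝ)) = 0 := by
    apply measure_union_null
    · rw [Measure.volume_eq_prod, Measure.prod_prod]; simp
    · rw [Measure.volume_eq_prod, Measure.prod_prod]; simp
  have hae : ∀ᵐ p ∂(volume : Measure (ℝ × ℝ)),
      dens p = (Ioi (0:ℝ) ×ˢ Ioi (0:ℝ)).indicator dens p := by
    have := measure_eq_zero_iff_ae_notMem.mp hnull
    filter_upwards [this] with p hp
    by_cases hmem : p ∈ Ioi (0:ℝ) ×ˢ Ioi (0:ℝ)
    · rw [indicator_of_mem hmem]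
    · rw [indicator_of_notMem hmem]
      simp only [mem_union, mem_prod, mem_singleton_iff, mem_univ, not_or, not_and] at hp
      rcases not_and_or.mp hmem with h | h
      · have h1 : p.1 < 0 := lt_of_le_of_ne (not_lt.mp (by simpa using h)) (by tauto)
        simp [hdensdef, gammaPDF_of_neg h1]
      · have h2 : p.2 < 0 := lt_of_le_of_ne (not_lt.mp (by simpa using h)) (by tauto)
        simp [hdensdef, gammaPDF_of_neg h2]
  have step1 : ∫⁻ p in Φ ⁻¹' E, dens p
      = ∫⁻ p in Φ ⁻¹' E ∩ Ioi (0:ℝ) ×ˢ Ioi (0:ℝ), dens p := by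
    rw [lintegral_congr_ae (ae_restrict_of_ae hae), lintegral_indicator hQ,
      Measure.restrict_restrict hQ, inter_comm]
  rw [step1, ← psi_image]
  -- step 2 : change of variables
  have hder : ∀ q ∈ Ioi (0:ℝ) ×ˢ Ioo (0:ℝ) 1,
      HasFDerivWithinAt Ψ
        (LinearMap.toContinuousLinearMap (Matrix.toLin (Module.Basis.finTwoProd ℝ) (Module.Basis.finTwoProd ℝ)
          !![q.2, q.1; 1 - q.2, -q.1])) (Ioi (0:ℝ) ×ˢ Ioo (0:ℝ) 1) q :=
    fun q _ => (hasFDerivAt_psi q).hasFDerivWithinAt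
  have himg : ∫⁻ p in Φ ⁻¹' E ∩ Ψ '' (Ioi (0:ℝ) ×ˢ Ioo (0:ℝ) 1), dens p
      = ∫⁻ p in Ψ '' (Ioi (0:ℝ) ×ˢ Ioo (0:ℝ) 1), (Φ ⁻¹' E).indicator dens p := by
    rw [lintegral_indicator hEm, Measure.restrict_restrict hEm]
  rw [himg]
  rw [lintegral_image_eq_lintegral_abs_det_fderiv_mul volume hQ' hder psi_injOn
      ((Φ ⁻¹' E).indicator dens)]
  -- step 3 : pointwise computation on Q'
  have hpt : ∀ q ∈ Ioi (0:ℝ) ×ˢ Ioo (0:ℝ) 1,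
      ENNReal.ofReal
          |(LinearMap.toContinuousLinearMap (Matrix.toLin (Module.Basis.finTwoProd ℝ)
            (Module.Basis.finTwoProd ℝ) !![q.2, q.1; 1 - q.2, -q.1])).det|
        * (Φ ⁻¹' E).indicator dens (Ψ q)
      = E.indicator (fun q : ℝ × ℝ =>
          ENNReal.ofReal (q.1 ^ (a + c - 1) * exp (-q.1) / (Gamma a * Gamma c)) *
          ENNReal.ofReal (q.2 ^ (a - 1) * (1 - q.2) ^ (c - 1))) q := by
    intro q hq
    rw [det_psi_deriv, abs_neg, abs_of_pos hq.1]
    have hPQ : Φ (Ψ q) = q := phi_psi hq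
    have hmem : Ψ q ∈ Φ ⁻¹' E ↔ q ∈ E := by
      rw [mem_preimage, hPQ]
    by_cases hqE : q ∈ E
    · rw [indicator_of_mem (hmem.mpr hqE), indicator_of_mem hqE]
      have := dens_transform ha hc hq
      simpa [hdensdef, hΨdef] using this
    · rw [indicator_of_notMem (fun hx => hqE (hmem.mp hx)), indicator_of_notMem hqE, mul_zero]
  rw [setLIntegral_congr_fun hQ' hpt, lintegral_indicator hE,
    Measure.restrict_restrict hE]

lemma beta_core {a c : ℝ} (ha : 0 < a) (hc : 0 < c) :
    IndepFun (fun p : ℝ × ℝ => p.1 + p.2) (fun p : ℝ × ℝ => p.1 / (p.1 + p.2))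
      ((gammaMeasure a 1).prod (gammaMeasure c 1)) := by
  haveI := isProbabilityMeasure_gammaMeasure ha one_pos
  haveI := isProbabilityMeasure_gammaMeasure hc one_pos
  set μ := (gammaMeasure a 1).prod (gammaMeasure c 1) with hμdef
  haveI : IsProbabilityMeasure μ := by infer_instance
  set D1 : ℝ → ℝ≥0∞ :=
    fun s => ENNReal.ofReal (s ^ (a + c - 1) * exp (-s) / (Gamma a * Gamma c)) with hD1
  set D2 : ℝ → ℝ≥0∞ := fun b => ENNReal.ofReal (b ^ (a - 1) * (1 - b) ^ (c - 1)) with hD2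
  have hD1m : Measurable D1 := by
    apply Measurable.ennreal_ofReal
    exact (((measurable_id.pow_const _).mul (measurable_id.neg.exp)).div_const _)
  have hD2m : Measurable D2 := by
    apply Measurable.ennreal_ofReal
    exact (measurable_id.pow_const _).mul ((measurable_const.sub measurable_id).pow_const _)
  have hprodint : ∀ (A B : Set ℝ), MeasurableSet A → MeasurableSet B →
      (∫⁻ q in (A ×ˢ B) ∩ Ioi (0:ℝ) ×ˢ Ioo (0:ℝ) 1, D1 q.1 * D2 q.2)
        = (∫⁻ s in A ∩ Ioi (0:ℝ), D1 s) * ∫⁻ b in B ∩ Ioo (0:ℝ) 1, D2 b := by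
    intro A B hA hB
    rw [prod_inter_prod, Measure.volume_eq_prod, ← Measure.prod_restrict,
      lintegral_prod_mul hD1m.aemeasurable hD2m.aemeasurable]
  have hkey : ∀ (A B : Set ℝ), MeasurableSet A → MeasurableSet B →
      μ ((fun p : ℝ × ℝ => p.1 + p.2) ⁻¹' A ∩ (fun p : ℝ × ℝ => p.1 / (p.1 + p.2)) ⁻¹' B)
        = (∫⁻ s in A ∩ Ioi (0:ℝ), D1 s) * ∫⁻ b in B ∩ Ioo (0:ℝ) 1, D2 b := by
    intro A B hA hB
    rw [← Set.mk_preimage_prod, map_phi_apply ha hc (hA.prod hB)]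
    exact hprodint A B hA hB
  have huniv : (∫⁻ s in (univ : Set ℝ) ∩ Ioi (0:ℝ), D1 s)
      * (∫⁻ b in (univ : Set ℝ) ∩ Ioo (0:ℝ) 1, D2 b) = 1 := by
    rw [← hkey univ univ MeasurableSet.univ MeasurableSet.univ]
    simp
  rw [indepFun_iff_measure_inter_preimage_eq_mul]
  intro A B hA hB
  have e1 : (fun p : ℝ × ℝ => p.1 + p.2) ⁻¹' A
      = (fun p : ℝ × ℝ => p.1 + p.2) ⁻¹' A ∩ (fun p : ℝ × ℝ => p.1 / (p.1 + p.2)) ⁻¹' univ := by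
    simp
  have e2 : (fun p : ℝ × ℝ => p.1 / (p.1 + p.2)) ⁻¹' B
      = (fun p : ℝ × ℝ => p.1 + p.2) ⁻¹' univ ∩ (fun p : ℝ × ℝ => p.1 / (p.1 + p.2)) ⁻¹' B := by
    simp
  rw [hkey A B hA hB, e1, e2, hkey A univ hA MeasurableSet.univ,
    hkey univ B MeasurableSet.univ hB]
  calc (∫⁻ s in A ∩ Ioi (0:ℝ), D1 s) * ∫⁻ b in B ∩ Ioo (0:ℝ) 1, D2 b
      = ((∫⁻ s in A ∩ Ioi (0:ℝ), D1 s) * ∫⁻ b in B ∩ Ioo (0:ℝ) 1, D2 b)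
        * ((∫⁻ s in (univ : Set ℝ) ∩ Ioi (0:ℝ), D1 s)
          * ∫⁻ b in (univ : Set ℝ) ∩ Ioo (0:ℝ) 1, D2 b) := by rw [huniv, mul_one]
    _ = ((∫⁻ s in A ∩ Ioi (0:ℝ), D1 s) * ∫⁻ b in (univ : Set ℝ) ∩ Ioo (0:ℝ) 1, D2 b)
        * ((∫⁻ s in (univ : Set ℝ) ∩ Ioi (0:ℝ), D1 s) * ∫⁻ b in B ∩ Ioo (0:ℝ) 1, D2 b) := by
        ring

lemma indepFun_comp_of_map {Ω α β γ : Type*} [MeasurableSpace Ω] [MeasurableSpace α]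
    [MeasurableSpace β] [MeasurableSpace γ] {P : Measure Ω} {T : Ω → α} (hT : Measurable T)
    {f : α → β} {g : α → γ} (hf : Measurable f) (hg : Measurable g)
    (h : IndepFun f g (P.map T)) : IndepFun (fun ω => f (T ω)) (fun ω => g (T ω)) P := by
  rw [indepFun_iff_measure_inter_preimage_eq_mul] at h ⊢
  intro s t hs ht
  have h1 : (fun ω => f (T ω)) ⁻¹' s = T ⁻¹' (f ⁻¹' s) := rfl
  have h2 : (fun ω => g (T ω)) ⁻¹' t = T ⁻¹' (g ⁻¹' t) := rfl
  rw [h1, h2, ← preimage_inter, ← Measure.map_apply hT ((hf hs).inter (hg ht)),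
    ← Measure.map_apply hT (hf hs), ← Measure.map_apply hT (hg ht)]
  exact h s t hs ht

lemma setIntegral_indep {Ω : Type*} {m1 m0 : MeasurableSpace Ω} (hm1 : m1 ≤ m0)
    {P : Measure Ω} [IsProbabilityMeasure P]
    {X B : Ω → ℝ} (hX : Measurable[m1] X) (hB : Measurable B)
    (hInd : Indep m1 (MeasurableSpace.comap B inferInstance) P)
    {g : ℝ → ℝ} (hg : Measurable g) {C : ℝ} (hbd : ∀ x, |g x| ≤ C)
    {A : Set Ω} (hA : MeasurableSet[m1] A) :
    ∫ ω in A, g (X ω + (1 - X ω) * B ω) ∂P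
      = ∫ ω in A, (∫ b, g (X ω + (1 - X ω) * b) ∂(P.map B)) ∂P := by
  have hC : 0 ≤ C := le_trans (abs_nonneg _) (hbd 0)
  haveI : IsProbabilityMeasure (P.map B) := Measure.isProbabilityMeasure_map hB.aemeasurable
  set clamp : ℝ → ℝ := fun x => min (max x 0) 1 with hclampdef
  have hclampm : Measurable clamp := (measurable_id.max measurable_const).min measurable_const
  have hclampabs : ∀ x, |clamp x| ≤ 1 := by
    intro x
    rw [abs_le]
    constructor
    · have : (0:ℝ) ≤ max x 0 := le_max_right x 0
      simp only [hclampdef]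
      rcases le_total (max x 0) 1 with h | h
      · rw [min_eq_left h]; linarith
      · rw [min_eq_right h]; linarith
    · exact min_le_right _ _
  set pair : Ω → ℝ × ℝ := fun ω => (A.indicator (fun _ => (1:ℝ)) ω, X ω) with hpairdef
  have hpairm1 : Measurable[m1] pair := (measurable_const.indicator hA).prodMk hX
  have hpair : Measurable pair := hpairm1.mono hm1 le_rfl
  have hXm : Measurable X := hX.mono hm1 le_rfl
  have hIndFun : IndepFun pair B P := by
    rw [IndepFun_iff_Indep]
    exact indep_of_indep_of_le_left hInd hpairm1.comap_le
  set G : (ℝ × ℝ) × ℝ → ℝ :=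
    fun q => clamp q.1.1 * g (q.1.2 + (1 - q.1.2) * q.2) with hGdef
  have hGm : Measurable G := by
    apply (hclampm.comp (measurable_fst.comp measurable_fst)).mul
    apply hg.comp
    exact ((measurable_snd.comp measurable_fst).add
      ((measurable_const.sub (measurable_snd.comp measurable_fst)).mul measurable_snd))
  have hGbd : ∀ q, |G q| ≤ C := by
    intro q
    rw [hGdef, abs_mul]
    calc |clamp q.1.1| * |g (q.1.2 + (1 - q.1.2) * q.2)| ≤ 1 * C :=
      mul_le_mul (hclampabs _) (hbd _) (abs_nonneg _) zero_le_one
    _ = C := one_mul C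
  have hGint : Integrable G ((P.map pair).prod (P.map B)) := by
    haveI : IsProbabilityMeasure (P.map pair) := Measure.isProbabilityMeasure_map hpair.aemeasurable
    refine Integrable.mono' (integrable_const C) hGm.aestronglyMeasurable ?_
    exact ae_of_all _ fun q => by rw [Real.norm_eq_abs]; exact hGbd q
  set H : ℝ → ℝ := fun x => ∫ b, g (x + (1 - x) * b) ∂(P.map B) with hHdef
  have hHsm : StronglyMeasurable H := by
    apply MeasureTheory.StronglyMeasurable.integral_prod_right'
      (f := fun q : ℝ × ℝ => g (q.1 + (1 - q.1) * q.2))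
    exact (hg.comp (measurable_fst.add
      ((measurable_const.sub measurable_fst).mul measurable_snd))).stronglyMeasurable
  have hmapeq := (indepFun_iff_map_prod_eq_prod_map_map hpair.aemeasurable
    hB.aemeasurable).mp hIndFun
  have stepA : ∫ ω in A, g (X ω + (1 - X ω) * B ω) ∂P = ∫ ω, G (pair ω, B ω) ∂P := by
    rw [← integral_indicator (hm1 _ hA)]
    refine integral_congr_ae (ae_of_all _ fun ω => ?_)
    by_cases hω : ω ∈ A
    · rw [indicator_of_mem hω]
      simp only [hGdef, hpairdef, indicator_of_mem hω]
      norm_num [hclampdef]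
    · rw [indicator_of_notMem hω]
      simp only [hGdef, hpairdef, indicator_of_notMem hω]
      norm_num [hclampdef]
  have stepB : ∫ ω, G (pair ω, B ω) ∂P = ∫ q, G q ∂((P.map pair).prod (P.map B)) := by
    rw [← hmapeq, integral_map (hpair.aemeasurable.prodMk hB.aemeasurable)
      hGm.aestronglyMeasurable]
  have stepC : ∫ q, G q ∂((P.map pair).prod (P.map B))
      = ∫ p, clamp p.1 * H p.2 ∂(P.map pair) := by
    rw [integral_prod _ hGint]
    refine integral_congr_ae (ae_of_all _ fun p => ?_)
    simp only [hGdef, hHdef]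
    rw [integral_const_mul]
  have stepD : ∫ p, clamp p.1 * H p.2 ∂(P.map pair)
      = ∫ ω, clamp (A.indicator (fun _ => (1:ℝ)) ω) * H (X ω) ∂P := by
    rw [integral_map hpair.aemeasurable]
    exact ((hclampm.comp measurable_fst).mul
      (hHsm.measurable.comp measurable_snd)).aestronglyMeasurable
  have stepE : ∫ ω, clamp (A.indicator (fun _ => (1:ℝ)) ω) * H (X ω) ∂P
      = ∫ ω in A, H (X ω) ∂P := by
    rw [← integral_indicator (hm1 _ hA)]
    refine integral_congr_ae (ae_of_all _ fun ω => ?_)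
    by_cases hω : ω ∈ A
    · simp only [indicator_of_mem hω]
      norm_num [hclampdef]
    · simp only [indicator_of_notMem hω]
      norm_num [hclampdef]
  rw [stepA, stepB, stepC, stepD, stepE]


lemma indep_finset_B {Ω : Type*} [MeasurableSpace Ω] (P : Measure Ω) [IsProbabilityMeasure P]
    (γ : ℝ → Ω → ℝ) (hγ : IsStdGammaProcess P γ) {r t u : ℝ}
    (ht : 0 ≤ t) (htu : t < u) (hur : u < r)
    (ζ : ℝ → Ω → ℝ) (hζ : ∀ s ω, ζ s ω = γ (min s r) ω / γ r ω)
    (F : Finset ℝ) (hF : ↑F ⊆ Icc (0:ℝ) t) :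
    Indep (⨆ s ∈ F, MeasurableSpace.comap (ζ s) inferInstance)
      (MeasurableSpace.comap (fun ω => (γ u ω - γ t ω) / (γ r ω - γ t ω)) inferInstance) P := by
  classical
  have hu0 : 0 ≤ u := le_trans ht htu.le
  have hr0 : 0 ≤ r := le_trans hu0 hur.le
  have htr : t < r := htu.trans hur
  set n := F.card with hn
  set e := F.orderIsoOfFin hn.symm with he
  set sfun : Fin n → ℝ := fun k => (e k : ℝ) with hsfun
  have hsmono : Monotone sfun := fun i j hij => by
    exact_mod_cast Subtype.coe_le_coe.mpr (e.monotone hij)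
  have hsmem : ∀ k, sfun k ∈ Icc (0:ℝ) t := fun k => hF (e k).2
  -- the time grid
  set bfun : ℕ → ℝ := fun j =>
    if h : j < n then sfun ⟨j, h⟩ else if j = n then t else if j = n + 1 then u else r
    with hbfun
  set ρ : ℕ → ℝ := fun j => if h : 0 < j then bfun (j - 1) else 0 with hρ
  have hb_nonneg : ∀ j, 0 ≤ bfun j := by
    intro j
    simp only [hbfun]
    split_ifs
    · exact (hsmem _).1
    · exact ht
    · exact hu0
    · exact hr0
  have hbstep : ∀ j, bfun j ≤ bfun (j + 1) := by
    intro j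
    by_cases h1 : j + 1 < n
    · have h0 : j < n := by omega
      simp only [hbfun, dif_pos h0, dif_pos h1]
      exact hsmono (by simp [Fin.mk_le_mk])
    · by_cases h0 : j < n
      · have hjn : j + 1 = n := by omega
        simp only [hbfun, dif_pos h0, dif_neg (by omega : ¬ j + 1 < n), if_pos hjn]
        exact (hsmem _).2
      · simp only [hbfun, dif_neg h0, dif_neg (by omega : ¬ j + 1 < n)]
        by_cases h2 : j = n
        · rw [if_pos h2, if_neg (by omega), if_pos (by omega)]
          exact htu.le
        · rw [if_neg h2]
          by_cases h3 : j = n + 1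
          · rw [if_pos h3, if_neg (by omega), if_neg (by omega)]
            exact hur.le
          · rw [if_neg h3, if_neg (by omega), if_neg (by omega)]
  have hρ0 : ρ 0 = 0 := by simp [hρ]
  have hρsucc : ∀ k, ρ (k + 1) = bfun k := by
    intro k
    simp [hρ]
  have hρmono : Monotone ρ := by
    apply monotone_nat_of_le_succ
    intro j
    cases j with
    | zero => rw [hρ0, hρsucc]; exact hb_nonneg 0
    | succ m => rw [hρsucc, hρsucc]; exact hbstep m
  have hρ_nonneg : ∀ j, 0 ≤ ρ j := by
    intro j
    cases j with
    | zero => rw [hρ0]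
    | succ m => rw [hρsucc]; exact hb_nonneg m
  have hbn : bfun n = t := by simp [hbfun]
  have hbn1 : bfun (n + 1) = u := by
    simp only [hbfun]
    rw [dif_neg (by omega : ¬ n + 1 < n), if_neg (by omega : ¬ n + 1 = n)]
    norm_num
  have hbn2 : bfun (n + 2) = r := by
    simp only [hbfun]
    rw [dif_neg (by omega : ¬ n + 2 < n), if_neg (by omega : ¬ n + 2 = n),
      if_neg (by omega : ¬ n + 2 = n + 1)]
  have hbk : ∀ k : Fin n, bfun k = sfun k := by
    intro k
    simp only [hbfun, dif_pos k.2, Fin.eta]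
  -- the increments
  set I : ℕ → Ω → ℝ := fun j ω => γ (ρ (j + 1)) ω - γ (ρ j) ω with hI
  have hIm : ∀ j, Measurable (I j) := fun j => (hγ.measurable _).sub (hγ.measurable _)
  have hiIndep : iIndepFun (fun i : Fin (n + 3) => I i) P := by
    have h := hγ.indep_incr (n + 3) (fun j : Fin (n + 3 + 1) => ρ (j : ℕ))
      (fun i j hij => hρmono hij) (fun i => hρ_nonneg _)
    have heq : (fun i : Fin (n + 3) => fun ω =>
        γ ((fun j : Fin (n + 3 + 1) => ρ (j : ℕ)) i.succ) ω
          - γ ((fun j : Fin (n + 3 + 1) => ρ (j : ℕ)) i.castSucc) ω)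
        = fun i : Fin (n + 3) => I (i : ℕ) := by
      funext i
      simp only [hI, Fin.val_succ, Fin.coe_castSucc]
    rwa [heq] at h
  -- blocks
  set SS : Finset (Fin (n + 3)) := Finset.univ.filter (fun i => (i : ℕ) ≤ n) with hSS
  set TT : Finset (Fin (n + 3)) := Finset.univ.filter (fun i => n < (i : ℕ)) with hTT
  have hST : Disjoint SS TT := by
    rw [Finset.disjoint_left]
    intro i hi hi'
    simp only [hSS, hTT, Finset.mem_filter] at hi hi'
    omega
  have hblocks := hiIndep.indepFun_finset SS TT hST (fun i => hIm i)
  set J : Ω → (Fin (n + 1) → ℝ) := fun ω k => I (k : ℕ) ω with hJ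
  have hJm : Measurable J := measurable_pi_lambda _ fun k => hIm _
  set K : Ω → ℝ × ℝ := fun ω => (I (n + 1) ω, I (n + 2) ω) with hK
  have hKm : Measurable K := (hIm _).prodMk (hIm _)
  have hJK : IndepFun J K P := by
    have hφS : Measurable (fun v : { x : Fin (n+3) // x ∈ SS } → ℝ => (fun k : Fin (n + 1) =>
        v ⟨⟨(k : ℕ), by omega⟩, by
          simp only [hSS, Finset.mem_filter]
          exact ⟨Finset.mem_univ _, by omega⟩⟩)) :=
      measurable_pi_lambda _ fun k => measurable_pi_apply _
    have hφT : Measurable (fun v : { x : Fin (n+3) // x ∈ TT } → ℝ =>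
        (v ⟨⟨n + 1, by omega⟩, by
            simp only [hTT, Finset.mem_filter]
            exact ⟨Finset.mem_univ _, by omega⟩⟩,
         v ⟨⟨n + 2, by omega⟩, by
            simp only [hTT, Finset.mem_filter]
            exact ⟨Finset.mem_univ _, by omega⟩⟩)) :=
      (measurable_pi_apply _).prodMk (measurable_pi_apply _)
    exact hblocks.comp hφS hφT
  have hYZ : IndepFun (I (n + 1)) (I (n + 2)) P := by
    have := hiIndep.indepFun (i := (⟨n + 1, by omega⟩ : Fin (n + 3)))
      (j := (⟨n + 2, by omega⟩ : Fin (n + 3))) (by simp [Fin.ext_iff])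
    exact this
  have hlawY : P.map (I (n + 1)) = gammaMeasure (u - t) 1 := by
    have hIeq : I (n + 1) = fun ω => γ u ω - γ t ω := by
      funext ω
      simp only [hI]
      rw [hρsucc, hρsucc, hbn1, hbn]
    rw [hIeq]
    exact hγ.incr_law t u ht htu
  have hlawZ : P.map (I (n + 2)) = gammaMeasure (r - u) 1 := by
    have hIeq : I (n + 2) = fun ω => γ r ω - γ u ω := by
      funext ω
      simp only [hI]
      rw [hρsucc, hρsucc, hbn2, hbn1]
    rw [hIeq]
    exact hγ.incr_law u r hu0 hur
  have hKlaw : P.map K = (gammaMeasure (u - t) 1).prod (gammaMeasure (r - u) 1) := by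
    rw [show K = fun ω => (I (n+1) ω, I (n+2) ω) from rfl,
      (indepFun_iff_map_prod_eq_prod_map_map (hIm _).aemeasurable
        (hIm _).aemeasurable).mp hYZ, hlawY, hlawZ]
  set Sm : Ω → ℝ := fun ω => I (n + 1) ω + I (n + 2) ω with hSm
  have hSmm : Measurable Sm := (hIm _).add (hIm _)
  set Bf : Ω → ℝ := fun ω => I (n + 1) ω / (I (n + 1) ω + I (n + 2) ω) with hBf
  have hBfm : Measurable Bf := (hIm _).div ((hIm _).add (hIm _))
  have hSB : IndepFun Sm Bf P := by
    have hsum : Measurable (fun p : ℝ × ℝ => p.1 + p.2) := measurable_fst.add measurable_snd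
    have hrat : Measurable (fun p : ℝ × ℝ => p.1 / (p.1 + p.2)) :=
      measurable_fst.div (measurable_fst.add measurable_snd)
    have := indepFun_comp_of_map hKm hsum hrat
      (by rw [hKlaw]; exact beta_core (sub_pos.mpr htu) (sub_pos.mpr hur))
    exact this
  -- assemble the triple
  haveI : IsProbabilityMeasure (P.map J) := Measure.isProbabilityMeasure_map hJm.aemeasurable
  haveI : IsProbabilityMeasure (P.map Sm) := Measure.isProbabilityMeasure_map hSmm.aemeasurable
  haveI : IsProbabilityMeasure (P.map Bf) := Measure.isProbabilityMeasure_map hBfm.aemeasurable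
  have hJSB : IndepFun (fun ω => (J ω, Sm ω)) Bf P := by
    have hJSBm : IndepFun J (fun ω => (Sm ω, Bf ω)) P := by
      have hφ : Measurable (fun p : ℝ × ℝ => (p.1 + p.2, p.1 / (p.1 + p.2))) :=
        (measurable_fst.add measurable_snd).prodMk
          (measurable_fst.div (measurable_fst.add measurable_snd))
      exact hJK.comp measurable_id hφ
    have hJSm : IndepFun J Sm P := hJK.comp measurable_id (measurable_fst.add measurable_snd)
    apply (indepFun_iff_map_prod_eq_prod_map_map
      ((hJm.prodMk hSmm)).aemeasurable hBfm.aemeasurable).mpr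
    have e1 : P.map (fun ω => (J ω, (Sm ω, Bf ω)))
        = (P.map J).prod ((P.map Sm).prod (P.map Bf)) := by
      rw [(indepFun_iff_map_prod_eq_prod_map_map hJm.aemeasurable
          (hSmm.prodMk hBfm).aemeasurable).mp hJSBm,
        (indepFun_iff_map_prod_eq_prod_map_map hSmm.aemeasurable hBfm.aemeasurable).mp hSB]
    have e2 : P.map (fun ω => (J ω, Sm ω)) = (P.map J).prod (P.map Sm) := by
      rw [(indepFun_iff_map_prod_eq_prod_map_map hJm.aemeasurable hSmm.aemeasurable).mp hJSm]
    calc P.map (fun ω => ((J ω, Sm ω), Bf ω))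
        = Measure.map (MeasurableEquiv.prodAssoc.symm)
            (P.map (fun ω => (J ω, (Sm ω, Bf ω)))) := by
          rw [Measure.map_map MeasurableEquiv.prodAssoc.symm.measurable
            (hJm.prodMk (hSmm.prodMk hBfm))]
          rfl
      _ = ((P.map J).prod (P.map Sm)).prod (P.map Bf) := by
          rw [e1]
          exact ((measurePreserving_prodAssoc (P.map J) (P.map Sm) (P.map Bf)).symm
            MeasurableEquiv.prodAssoc).map_eq
      _ = (P.map (fun ω => (J ω, Sm ω))).prod (P.map Bf) := by rw [e2]
  -- pass to the bridge vector
  set ψmap : (Fin (n + 1) → ℝ) × ℝ → (Fin n → ℝ) := fun q k =>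
    (∑ j : Fin (n + 1), if (j : ℕ) ≤ (k : ℕ) then q.1 j else 0)
      / ((∑ j : Fin (n + 1), q.1 j) + q.2) with hψmap
  have hψm : Measurable ψmap := by
    apply measurable_pi_lambda
    intro k
    apply Measurable.div
    · apply Finset.measurable_sum
      intro j _
      by_cases hc : (j : ℕ) ≤ (k : ℕ)
      · simp only [if_pos hc]
        exact (measurable_pi_apply j).comp measurable_fst
      · simp only [if_neg hc]
        exact measurable_const
    · exact ((Finset.measurable_sum _ fun j _ =>
        (measurable_pi_apply j).comp measurable_fst).add measurable_snd)
  set V : Ω → (Fin n → ℝ) := fun ω k => ζ (sfun k) ω with hV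
  set B : Ω → ℝ := fun ω => (γ u ω - γ t ω) / (γ r ω - γ t ω) with hB
  have hVae : (fun ω => ψmap (J ω, Sm ω)) =ᵐ[P] V := by
    filter_upwards [hγ.zero] with ω hω0
    funext k
    have htel : ∀ m : ℕ, (∑ j ∈ Finset.range m, I j ω) = γ (ρ m) ω - γ 0 ω := by
      intro m
      have := Finset.sum_range_sub (fun j => γ (ρ j) ω) m
      rw [this, hρ0]
    have hnum : (∑ j : Fin (n + 1), if (j : ℕ) ≤ (k : ℕ) then I (j : ℕ) ω else 0)
        = γ (sfun k) ω := by
      rw [Fin.sum_univ_eq_sum_range (fun j => if j ≤ (k : ℕ) then I j ω else 0) (n + 1)]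
      rw [← Finset.sum_filter]
      have hfil : Finset.filter (fun j => j ≤ (k : ℕ)) (Finset.range (n + 1))
          = Finset.range ((k : ℕ) + 1) := by
        ext j
        simp only [Finset.mem_filter, Finset.mem_range]
        omega
      rw [hfil, htel, hρsucc, hbk, hω0, sub_zero]
    have hden : ((∑ j : Fin (n + 1), I (j : ℕ) ω) + Sm ω) = γ r ω := by
      rw [Fin.sum_univ_eq_sum_range (fun j => I j ω) (n + 1)]
      have : (∑ j ∈ Finset.range (n + 1), I j ω) + Sm ω = ∑ j ∈ Finset.range (n + 3), I j ω := by
        rw [Finset.sum_range_succ (f := fun j => I j ω) (n := n + 2),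
          Finset.sum_range_succ (f := fun j => I j ω) (n := n + 1)]
        simp only [hSm]
        ring
      rw [this, htel, hρsucc, hbn2, hω0, sub_zero]
    calc ψmap (J ω, Sm ω) k
        = (∑ j : Fin (n + 1), if (j : ℕ) ≤ (k : ℕ) then I (j : ℕ) ω else 0)
          / ((∑ j : Fin (n + 1), I (j : ℕ) ω) + Sm ω) := rfl
      _ = γ (sfun k) ω / γ r ω := by rw [hnum, hden]
      _ = V ω k := by
          rw [show V ω k = ζ (sfun k) ω from rfl, hζ,
            min_eq_left (le_trans (hsmem k).2 htr.le)]
  have hBeq : Bf =ᵐ[P] B := by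
    refine ae_of_all _ fun ω => ?_
    simp only [hBf, hB, hI]
    rw [hρsucc, hρsucc, hρsucc, hbn, hbn1, hbn2]
    congr 1
    ring
  have hVB : IndepFun V B P := (hJSB.comp hψm measurable_id).congr hVae hBeq
  -- identify the sigma-algebras
  have hcomapV : MeasurableSpace.comap V inferInstance
      = ⨆ s ∈ F, MeasurableSpace.comap (ζ s) inferInstance := by
    have hpi : (inferInstance : MeasurableSpace (Fin n → ℝ))
        = ⨆ k : Fin n, MeasurableSpace.comap (fun x : Fin n → ℝ => x k) inferInstance := rfl
    rw [hpi, MeasurableSpace.comap_iSup]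
    apply le_antisymm
    · refine iSup_le fun k => ?_
      rw [MeasurableSpace.comap_comp]
      have hk : sfun k ∈ F := (e k).2
      have : ((fun x : Fin n → ℝ => x k) ∘ V) = ζ (sfun k) := rfl
      rw [this]
      exact le_iSup₂ (f := fun s (_ : s ∈ F) => MeasurableSpace.comap (ζ s) inferInstance)
        (sfun k) hk
    · refine iSup₂_le fun s hs => ?_
      set k := e.symm ⟨s, hs⟩ with hkdef
      have hsk : sfun k = s := by
        simp only [hsfun, hkdef, OrderIso.apply_symm_apply]
      have : MeasurableSpace.comap (ζ s) inferInstance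
          = MeasurableSpace.comap ((fun x : Fin n → ℝ => x k) ∘ V) inferInstance := by
        rw [show ((fun x : Fin n → ℝ => x k) ∘ V) = ζ (sfun k) from rfl, hsk]
      rw [this, ← MeasurableSpace.comap_comp]
      exact le_iSup (fun k : Fin n => MeasurableSpace.comap
        (fun x : Fin n → ℝ => x k) inferInstance |>.comap V) k
  rw [IndepFun_iff_Indep] at hVB
  rw [← hcomapV]
  exact hVB

lemma indep_m1_B {Ω : Type*} [MeasurableSpace Ω] (P : Measure Ω) [IsProbabilityMeasure P]
    (γ : ℝ → Ω → ℝ) (hγ : IsStdGammaProcess P γ) {r t u : ℝ}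
    (ht : 0 ≤ t) (htu : t < u) (hur : u < r)
    (ζ : ℝ → Ω → ℝ) (hζ : ∀ s ω, ζ s ω = γ (min s r) ω / γ r ω) :
    Indep (⨆ s ∈ Icc (0:ℝ) t, MeasurableSpace.comap (ζ s) inferInstance)
      (MeasurableSpace.comap (fun ω => (γ u ω - γ t ω) / (γ r ω - γ t ω)) inferInstance) P := by
  have hζmeas : ∀ s, Measurable (ζ s) := fun s => by
    have : ζ s = fun ω => γ (min s r) ω / γ r ω := funext fun ω => hζ s ω
    rw [this]
    exact (hγ.measurable _).div (hγ.measurable r)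
  have hBm : Measurable (fun ω => (γ u ω - γ t ω) / (γ r ω - γ t ω)) :=
    ((hγ.measurable u).sub (hγ.measurable t)).div ((hγ.measurable r).sub (hγ.measurable t))
  have hm1eq : (⨆ s ∈ Icc (0:ℝ) t, MeasurableSpace.comap (ζ s) inferInstance)
      = ⨆ F : {F : Finset ℝ // ↑F ⊆ Icc (0:ℝ) t},
          ⨆ s ∈ F.1, MeasurableSpace.comap (ζ s) inferInstance := by
    apply le_antisymm
    · refine iSup₂_le fun s hs => ?_
      have h1 : MeasurableSpace.comap (ζ s) inferInstance
          ≤ ⨆ x ∈ ({s} : Finset ℝ), MeasurableSpace.comap (ζ x) inferInstance :=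
        le_iSup₂ (f := fun x (_ : x ∈ ({s} : Finset ℝ)) =>
          MeasurableSpace.comap (ζ x) inferInstance) s (Finset.mem_singleton_self s)
      exact h1.trans (le_iSup (fun F : {F : Finset ℝ // ↑F ⊆ Icc (0:ℝ) t} =>
        ⨆ x ∈ F.1, MeasurableSpace.comap (ζ x) inferInstance) ⟨{s}, by simpa using hs⟩)
    · exact iSup_le fun F => iSup₂_le fun s hs =>
        le_iSup₂ (f := fun x (_ : x ∈ Icc (0:ℝ) t) =>
          MeasurableSpace.comap (ζ x) inferInstance) s (F.2 hs)
  rw [hm1eq]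
  apply indep_iSup_of_directed_le
  · rintro ⟨F, hF⟩
    exact indep_finset_B P γ hγ ht htu hur ζ hζ F hF
  · exact fun F => iSup₂_le fun s _ => (hζmeas s).comap_le
  · exact hBm.comap_le
  · intro F G
    refine ⟨⟨F.1 ∪ G.1, by rw [Finset.coe_union]; exact union_subset F.2 G.2⟩, ?_, ?_⟩
    · exact iSup₂_le fun s hs => le_iSup₂ (f := fun x (_ : x ∈ F.1 ∪ G.1) =>
        MeasurableSpace.comap (ζ x) inferInstance) s (Finset.mem_union_left _ hs)
    · exact iSup₂_le fun s hs => le_iSup₂ (f := fun x (_ : x ∈ F.1 ∪ G.1) =>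
        MeasurableSpace.comap (ζ x) inferInstance) s (Finset.mem_union_right _ hs)

lemma markov_main {Ω : Type*} {m2 m1 m0 : MeasurableSpace Ω} (hm21 : m2 ≤ m1) (hm1le : m1 ≤ m0)
    {P : Measure Ω} [IsProbabilityMeasure P]
    {Xt Xu B : Ω → ℝ} (hXt2 : Measurable[m2] Xt) (hXu : Measurable Xu) (hB : Measurable B)
    (hIndep : Indep m1 (MeasurableSpace.comap B inferInstance) P)
    {g : ℝ → ℝ} (hg : Measurable g) {C : ℝ} (hbd : ∀ x, |g x| ≤ C)
    (haeq : (fun ω => g (Xu ω)) =ᵐ[P] fun ω => g (Xt ω + (1 - Xt ω) * B ω)) :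
    P[fun ω => g (Xu ω)|m1] =ᵐ[P] P[fun ω => g (Xu ω)|m2] := by
  have hm2le : m2 ≤ m0 := hm21.trans hm1le
  have hXt1 : Measurable[m1] Xt := hXt2.mono hm21 le_rfl
  have hXt : Measurable Xt := hXt1.mono hm1le le_rfl
  haveI : SigmaFinite (P.trim hm1le) := by infer_instance
  haveI : SigmaFinite (P.trim hm2le) := by infer_instance
  have hfm : Measurable fun ω => g (Xu ω) := hg.comp hXu
  have hfint : Integrable (fun ω => g (Xu ω)) P :=
    Integrable.mono' (integrable_const C) hfm.aestronglyMeasurable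
      (ae_of_all _ fun ω => by rw [Real.norm_eq_abs]; exact hbd _)
  haveI : IsProbabilityMeasure (P.map B) := Measure.isProbabilityMeasure_map hB.aemeasurable
  set H : ℝ → ℝ := fun x => ∫ b, g (x + (1 - x) * b) ∂(P.map B) with hHdef
  have hHsm : StronglyMeasurable H := by
    apply MeasureTheory.StronglyMeasurable.integral_prod_right'
      (f := fun q : ℝ × ℝ => g (q.1 + (1 - q.1) * q.2))
    exact (hg.comp (measurable_fst.add
      ((measurable_const.sub measurable_fst).mul measurable_snd))).stronglyMeasurable
  have hHbd : ∀ x, |H x| ≤ C := by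
    intro x
    rw [← Real.norm_eq_abs]
    calc ‖∫ b, g (x + (1 - x) * b) ∂(P.map B)‖ ≤ C * ((P.map B) Set.univ).toReal :=
      norm_integral_le_of_norm_le_const (ae_of_all _ fun b => by
        rw [Real.norm_eq_abs]; exact hbd _)
    _ = C := by simp
  set Y₀ : Ω → ℝ := fun ω => H (Xt ω) with hY₀def
  have hY₀m2 : Measurable[m2] Y₀ := hHsm.measurable.comp hXt2
  have hY₀int : Integrable Y₀ P := Integrable.mono' (integrable_const C)
    ((hHsm.measurable.comp hXt).aestronglyMeasurable)
    (ae_of_all _ fun ω => by rw [Real.norm_eq_abs]; exact hHbd _)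
  have hsetint : ∀ A : Set Ω, MeasurableSet[m1] A →
      ∫ ω in A, Y₀ ω ∂P = ∫ ω in A, g (Xu ω) ∂P := by
    intro A hA
    have h1 : ∫ ω in A, g (Xu ω) ∂P = ∫ ω in A, g (Xt ω + (1 - Xt ω) * B ω) ∂P :=
      setIntegral_congr_ae (hm1le _ hA) (haeq.mono fun ω h _ => h)
    rw [h1]
    exact (setIntegral_indep hm1le hXt1 hB hIndep hg hbd hA).symm
  have hc1 : Y₀ =ᵐ[P] P[fun ω => g (Xu ω)|m1] :=
    ae_eq_condExp_of_forall_setIntegral_eq hm1le hfint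
      (fun s _ _ => hY₀int.integrableOn)
      (fun s hs _ => hsetint s hs)
      ((hY₀m2.mono hm21 le_rfl).stronglyMeasurable.aestronglyMeasurable)
  have hc2 : Y₀ =ᵐ[P] P[fun ω => g (Xu ω)|m2] :=
    ae_eq_condExp_of_forall_setIntegral_eq hm2le hfint
      (fun s _ _ => hY₀int.integrableOn)
      (fun s hs _ => hsetint s (hm21 _ hs))
      (hY₀m2.stronglyMeasurable.aestronglyMeasurable)
  exact hc1.symm.trans hc2
end GammaBridgeAux

/-- For every `r > 0`, the gamma bridge `ζ^r` is a Markov process with respect to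
its natural filtration: for bounded measurable `g` and `0 ≤ t < u ≤ r`,
`E[g(ζ^r_u) | σ(ζ^r_s, s ≤ t)] = E[g(ζ^r_u) | σ(ζ^r_t)]` `P`-a.s. -/
theorem gamma_bridge_markov
    {Ω : Type*} [MeasurableSpace Ω] (P : Measure Ω) [IsProbabilityMeasure P]
    (γ : ℝ → Ω → ℝ) (hγ : IsStdGammaProcess P γ) (r : ℝ) (hr : 0 < r)
    (ζ : ℝ → Ω → ℝ) (hζ : ∀ s ω, ζ s ω = γ (min s r) ω / γ r ω)
    (g : ℝ → ℝ) (hg : Measurable g) (C : ℝ) (hbd : ∀ x, |g x| ≤ C)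
    (t u : ℝ) (ht : 0 ≤ t) (htu : t < u) (hur : u ≤ r) :
    P[fun ω => g (ζ u ω) | ⨆ s ∈ Set.Icc (0 : ℝ) t, MeasurableSpace.comap (ζ s) inferInstance]
      =ᵐ[P] P[fun ω => g (ζ u ω) | MeasurableSpace.comap (ζ t) inferInstance] := by
  classical
  have htr : t < r := lt_of_lt_of_le htu hur
  have hζmeas : ∀ s, Measurable (ζ s) := fun s => by
    have hfe : ζ s = fun ω => γ (min s r) ω / γ r ω := funext fun ω => hζ s ω
    rw [hfe]
    exact (hγ.measurable _).div (hγ.measurable r)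
  have hm1le : (⨆ s ∈ Set.Icc (0:ℝ) t, MeasurableSpace.comap (ζ s) inferInstance)
      ≤ ‹MeasurableSpace Ω› := iSup₂_le fun s _ => (hζmeas s).comap_le
  have hm2le : MeasurableSpace.comap (ζ t) inferInstance ≤ ‹MeasurableSpace Ω› :=
    (hζmeas t).comap_le
  have hm21 : MeasurableSpace.comap (ζ t) inferInstance
      ≤ ⨆ s ∈ Set.Icc (0:ℝ) t, MeasurableSpace.comap (ζ s) inferInstance :=
    le_iSup₂ (f := fun s (_ : s ∈ Set.Icc (0:ℝ) t) =>
      MeasurableSpace.comap (ζ s) inferInstance) t ⟨ht, le_rfl⟩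
  have hγr_pos : ∀ᵐ ω ∂P, 0 < γ r ω := by
    have h1 := GammaBridgeAux.ae_pos_of_map_gamma ((hγ.measurable r).sub (hγ.measurable 0))
      (hγ.incr_law 0 r le_rfl hr)
    filter_upwards [h1, hγ.zero] with ω h h0
    rwa [Pi.sub_apply, h0, sub_zero] at h
  rcases eq_or_lt_of_le hur with hur' | hur'
  · -- case u = r
    have hae1 : (fun ω => g (ζ u ω)) =ᵐ[P] fun _ => g 1 := by
      filter_upwards [hγr_pos] with ω hω
      rw [hζ, hur', min_self, div_self hω.ne']
    have e1 : P[fun ω => g (ζ u ω)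
        | ⨆ s ∈ Set.Icc (0:ℝ) t, MeasurableSpace.comap (ζ s) inferInstance]
          =ᵐ[P] fun _ => g 1 :=
      (condExp_congr_ae hae1).trans (Filter.EventuallyEq.of_eq (condExp_const hm1le _))
    have e2 : P[fun ω => g (ζ u ω) | MeasurableSpace.comap (ζ t) inferInstance]
          =ᵐ[P] fun _ => g 1 :=
      (condExp_congr_ae hae1).trans (Filter.EventuallyEq.of_eq (condExp_const hm2le _))
    exact e1.trans e2.symm
  · -- case u < r
    have hrt_pos : ∀ᵐ ω ∂P, 0 < γ r ω - γ t ω :=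
      GammaBridgeAux.ae_pos_of_map_gamma ((hγ.measurable r).sub (hγ.measurable t)) (hγ.incr_law t r ht htr)
    have hBm : Measurable (fun ω => (γ u ω - γ t ω) / (γ r ω - γ t ω)) :=
      ((hγ.measurable u).sub (hγ.measurable t)).div ((hγ.measurable r).sub (hγ.measurable t))
    have hIndep := GammaBridgeAux.indep_m1_B P γ hγ ht htu hur' ζ hζ
    have hζtm2 : Measurable[MeasurableSpace.comap (ζ t) inferInstance] (ζ t) :=
      measurable_iff_comap_le.mpr le_rfl
    have haeq : (fun ω => g (ζ u ω)) =ᵐ[P]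
        fun ω => g (ζ t ω + (1 - ζ t ω) * ((γ u ω - γ t ω) / (γ r ω - γ t ω))) := by
      filter_upwards [hγr_pos, hrt_pos] with ω h1 h2
      have h3 : ζ u ω = ζ t ω + (1 - ζ t ω) * ((γ u ω - γ t ω) / (γ r ω - γ t ω)) := by
        rw [hζ, hζ, min_eq_left hur, min_eq_left htr.le]
        field_simp
        ring
      rw [h3]
    exact GammaBridgeAux.markov_main hm21 hm1le hζtm2 (hζmeas u) hBm hIndep hg hbd haeq
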